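/- Let Z ~ Poisson(λ). If λ ≥ 1, then e^{−2/3}·λ^{2/3}/2 ≤ E[Z^{2/3}] ≤ λ^{2/3}; and if λ ≤ 1, then λ·e^{−λ} ≤ E[Z^{2/3}] ≤ λ. -/

import Mathlib

open Real

-- exp as tsum
lemma exp_tsum (x : ℝ) : (∑' n : ℕ, x ^ n / n.factorial) = Real.exp x := by
  rw [Real.exp_eq_exp_ℝ, NormedSpace.exp_eq_tsum_div]

lemma sum1 (x : ℝ) : Summable (fun n : ℕ => (n : ℝ) * x ^ n / n.factorial) := by
  rw [← summable_nat_add_iff 1]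
  have : (fun n : ℕ => ((n + 1 : ℕ) : ℝ) * x ^ (n + 1) / (n + 1).factorial)
      = fun n : ℕ => x * (x ^ n / n.factorial) := by
    funext n
    rw [Nat.factorial_succ]
    push_cast
    have h0 : ((n.factorial : ℝ)) ≠ 0 := by positivity
    field_simp
    ring
  rw [this]
  exact (Real.summable_pow_div_factorial x).mul_left x

lemma tsum1 (x : ℝ) : (∑' n : ℕ, (n : ℝ) * x ^ n / n.factorial) = x * Real.exp x := by
  rw [Summable.tsum_eq_zero_add (sum1 x)]
  have : (fun n : ℕ => ((n + 1 : ℕ) : ℝ) * x ^ (n + 1) / (n + 1).factorial)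
      = fun n : ℕ => x * (x ^ n / n.factorial) := by
    funext n
    rw [Nat.factorial_succ]
    push_cast
    have h0 : ((n.factorial : ℝ)) ≠ 0 := by positivity
    field_simp
    ring
  simp only [Nat.cast_zero, zero_mul, zero_div, zero_add]
  rw [this, tsum_mul_left, exp_tsum]


lemma g2_shift (x : ℝ) : (fun n : ℕ => (((n+2 : ℕ):ℝ) * (((n+2:ℕ):ℝ) - 1)) * x ^ (n + 2) / (n + 2).factorial)
    = fun n : ℕ => x ^ 2 * (x ^ n / n.factorial) := by
  funext n
  rw [show n + 2 = (n+1) + 1 from rfl, Nat.factorial_succ, Nat.factorial_succ]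
  push_cast
  have h0 : ((n.factorial : ℝ)) ≠ 0 := by positivity
  have h1 : ((n:ℝ) + 1) ≠ 0 := by positivity
  field_simp
  ring

lemma sum2 (x : ℝ) : Summable (fun n : ℕ => (n : ℝ) * ((n:ℝ) - 1) * x ^ n / n.factorial) := by
  rw [← summable_nat_add_iff 2]
  have := g2_shift x
  simp only [mul_div_assoc] at this ⊢
  rw [this]
  exact ((Real.summable_pow_div_factorial x).mul_left _)

lemma tsum2 (x : ℝ) : (∑' n : ℕ, (n : ℝ) * ((n:ℝ) - 1) * x ^ n / n.factorial) = x ^ 2 * Real.exp x := by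
  have h := Summable.sum_add_tsum_nat_add (f := fun n : ℕ => (n : ℝ) * ((n:ℝ) - 1) * x ^ n / n.factorial) 2 (sum2 x)
  have h2 : (∑ i ∈ Finset.range 2, (i : ℝ) * ((i:ℝ) - 1) * x ^ i / i.factorial) = 0 := by
    simp [Finset.sum_range_succ]
  rw [h2, zero_add] at h
  rw [← h]
  have := g2_shift x
  simp only [mul_div_assoc] at this ⊢
  rw [this, tsum_mul_left, exp_tsum]

lemma rpow23_le_self (n : ℕ) : (n:ℝ) ^ ((2:ℝ)/3) ≤ n := by
  rcases Nat.eq_zero_or_pos n with h|h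
  · simp [h, Real.zero_rpow (by norm_num : (2:ℝ)/3 ≠ 0)]
  · have h1 : (1:ℝ) ≤ n := by exact_mod_cast h
    calc (n:ℝ) ^ ((2:ℝ)/3) ≤ (n:ℝ) ^ (1:ℝ) :=
          Real.rpow_le_rpow_of_exponent_le h1 (by norm_num)
      _ = n := Real.rpow_one _

lemma p_eq (lam : ℝ) : (fun n : ℕ => Real.exp (-lam) * lam ^ n / n.factorial)
    = fun n : ℕ => Real.exp (-lam) * (lam ^ n / n.factorial) := by
  funext n; ring

lemma sum_p (lam : ℝ) : Summable (fun n : ℕ => Real.exp (-lam) * lam ^ n / n.factorial) := by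
  rw [p_eq]; exact (Real.summable_pow_div_factorial lam).mul_left _

lemma tsum_p (lam : ℝ) : (∑' n : ℕ, Real.exp (-lam) * lam ^ n / n.factorial) = 1 := by
  rw [p_eq, tsum_mul_left, exp_tsum, ← Real.exp_add]; simp

lemma pn_eq (lam : ℝ) : (fun n : ℕ => Real.exp (-lam) * lam ^ n / n.factorial * (n:ℝ))
    = fun n : ℕ => Real.exp (-lam) * ((n:ℝ) * lam ^ n / n.factorial) := by
  funext n; ring

lemma sum_pn (lam : ℝ) : Summable (fun n : ℕ => Real.exp (-lam) * lam ^ n / n.factorial * (n:ℝ)) := by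
  rw [pn_eq]; exact (sum1 lam).mul_left _

lemma tsum_pn (lam : ℝ) : (∑' n : ℕ, Real.exp (-lam) * lam ^ n / n.factorial * (n:ℝ)) = lam := by
  rw [pn_eq, tsum_mul_left, tsum1, ← mul_assoc, mul_comm (Real.exp (-lam)), mul_assoc,
    ← Real.exp_add]
  simp

lemma sum_f (lam : ℝ) (hlam : 0 ≤ lam) :
    Summable (fun n : ℕ => (Real.exp (-lam) * lam ^ n / n.factorial) * (n:ℝ) ^ ((2:ℝ)/3)) := by
  apply Summable.of_nonneg_of_le (fun n => by positivity) (fun n => ?_) (sum_pn lam)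
  have h0 : 0 ≤ Real.exp (-lam) * lam ^ n / n.factorial := by positivity
  exact mul_le_mul_of_nonneg_left (rpow23_le_self n) h0

lemma upper_lam (lam : ℝ) (hlam : 0 ≤ lam) :
    (∑' n : ℕ, (Real.exp (-lam) * lam ^ n / n.factorial) * (n:ℝ) ^ ((2:ℝ)/3)) ≤ lam := by
  refine le_trans (Summable.tsum_le_tsum (fun n => ?_) (sum_f lam hlam) (sum_pn lam)) (tsum_pn lam).le
  exact mul_le_mul_of_nonneg_left (rpow23_le_self n) (by positivity)

lemma lower_small (lam : ℝ) (hlam : 0 ≤ lam) :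
    lam * Real.exp (-lam)
      ≤ (∑' n : ℕ, (Real.exp (-lam) * lam ^ n / n.factorial) * (n:ℝ) ^ ((2:ℝ)/3)) := by
  have h := Summable.le_tsum (sum_f lam hlam) 1 (fun b _ => by positivity)
  simpa [Real.one_rpow, mul_comm] using h

lemma upper_jensen (lam : ℝ) (hlam : 0 < lam) :
    (∑' n : ℕ, (Real.exp (-lam) * lam ^ n / n.factorial) * (n:ℝ) ^ ((2:ℝ)/3))
      ≤ lam ^ ((2:ℝ)/3) := by
  set c1 : ℝ := lam ^ ((2:ℝ)/3) * (2/3) / lam with hc1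
  set c2 : ℝ := lam ^ ((2:ℝ)/3) / 3 with hc2
  have key : ∀ n : ℕ, (Real.exp (-lam) * lam ^ n / n.factorial) * (n:ℝ) ^ ((2:ℝ)/3)
      ≤ c1 * (Real.exp (-lam) * lam ^ n / n.factorial * (n:ℝ))
        + c2 * (Real.exp (-lam) * lam ^ n / n.factorial) := by
    intro n
    have hp : (0:ℝ) ≤ Real.exp (-lam) * lam ^ n / n.factorial := by positivity
    have hgm := Real.geom_mean_le_arith_mean2_weighted (by norm_num : (0:ℝ) ≤ 2/3)
      (by norm_num : (0:ℝ) ≤ 1/3) (show (0:ℝ) ≤ (n:ℝ)/lam by positivity)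
      (zero_le_one) (by norm_num : (2:ℝ)/3 + 1/3 = 1)
    rw [Real.one_rpow, mul_one, mul_one] at hgm
    have hdr : ((n:ℝ)/lam) ^ ((2:ℝ)/3) = (n:ℝ) ^ ((2:ℝ)/3) / lam ^ ((2:ℝ)/3) :=
      Real.div_rpow (Nat.cast_nonneg n) hlam.le ((2:ℝ)/3)
    rw [hdr] at hgm
    have hlp : (0:ℝ) < lam ^ ((2:ℝ)/3) := Real.rpow_pos_of_pos hlam _
    have hn : (n:ℝ) ^ ((2:ℝ)/3) ≤ c1 * (n:ℝ) + c2 := by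
      have := mul_le_mul_of_nonneg_left hgm hlp.le
      rw [mul_div_cancel₀ _ (ne_of_gt hlp)] at this
      calc (n:ℝ) ^ ((2:ℝ)/3) ≤ lam ^ ((2:ℝ)/3) * (2/3 * ((n:ℝ)/lam) + 1/3) := this
        _ = c1 * (n:ℝ) + c2 := by rw [hc1, hc2]; field_simp
    calc (Real.exp (-lam) * lam ^ n / n.factorial) * (n:ℝ) ^ ((2:ℝ)/3)
        ≤ (Real.exp (-lam) * lam ^ n / n.factorial) * (c1 * (n:ℝ) + c2) :=
          mul_le_mul_of_nonneg_left hn hp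
      _ = c1 * (Real.exp (-lam) * lam ^ n / n.factorial * (n:ℝ))
          + c2 * (Real.exp (-lam) * lam ^ n / n.factorial) := by ring
  have hs : Summable (fun n : ℕ => c1 * (Real.exp (-lam) * lam ^ n / n.factorial * (n:ℝ))
      + c2 * (Real.exp (-lam) * lam ^ n / n.factorial)) :=
    ((sum_pn lam).mul_left c1).add ((sum_p lam).mul_left c2)
  have := Summable.tsum_le_tsum key (sum_f lam hlam.le) hs
  rw [Summable.tsum_add ((sum_pn lam).mul_left c1) ((sum_p lam).mul_left c2),
    tsum_mul_left, tsum_mul_left, tsum_pn, tsum_p, mul_one] at this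
  calc (∑' n : ℕ, (Real.exp (-lam) * lam ^ n / n.factorial) * (n:ℝ) ^ ((2:ℝ)/3))
      ≤ c1 * lam + c2 := this
    _ = lam ^ ((2:ℝ)/3) := by rw [hc1, hc2]; field_simp; ring

lemma nn_cast (n : ℕ) : (0:ℝ) ≤ (n:ℝ) * ((n:ℝ) - 1) := by
  rcases Nat.eq_zero_or_pos n with h|h
  · simp [h]
  · have : (1:ℝ) ≤ n := by exact_mod_cast h
    have h0 : (0:ℝ) ≤ (n:ℝ) := Nat.cast_nonneg n
    nlinarith

set_option maxHeartbeats 1000000 in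
lemma lower_big (lam : ℝ) (h1 : 1 ≤ lam) :
    Real.exp (-(2/3)) * lam ^ ((2:ℝ)/3) / 2
      ≤ (∑' n : ℕ, (Real.exp (-lam) * lam ^ n / n.factorial) * (n:ℝ) ^ ((2:ℝ)/3)) := by
  have hl0 : (0:ℝ) < lam := lt_of_lt_of_le zero_lt_one h1
  set m : ℕ := ⌈2 * lam⌉₊ with hm
  have hm2 : 2 * lam ≤ (m:ℝ) := Nat.le_ceil _
  have hmle : (m:ℝ) ≤ 3 * lam := by
    have := Nat.ceil_lt_add_one (by positivity : (0:ℝ) ≤ 2 * lam)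
    rw [← hm] at this
    linarith
  have hm0 : (0:ℝ) < (m:ℝ) := by linarith
  -- tail bound
  have hshift2 : Summable (fun i : ℕ =>
      ((i + (m+1) : ℕ):ℝ) * (((i + (m+1) : ℕ):ℝ) - 1) * lam ^ (i + (m+1)) / (i + (m+1)).factorial) :=
    (summable_nat_add_iff (m+1)).2 (sum2 lam)
  have hshift1 : Summable (fun i : ℕ =>
      Real.exp (-lam) * lam ^ (i + (m+1)) / (i + (m+1)).factorial * ((i + (m+1) : ℕ):ℝ)) :=
    (summable_nat_add_iff (m+1)).2 (sum_pn lam)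
  have htail2 : (∑' i : ℕ,
      ((i + (m+1) : ℕ):ℝ) * (((i + (m+1) : ℕ):ℝ) - 1) * lam ^ (i + (m+1)) / (i + (m+1)).factorial)
      ≤ lam ^ 2 * Real.exp lam := by
    have hsplit := Summable.sum_add_tsum_nat_add
      (f := fun n : ℕ => (n:ℝ) * ((n:ℝ) - 1) * lam ^ n / n.factorial) (m+1) (sum2 lam)
    rw [tsum2] at hsplit
    have hpos : (0:ℝ) ≤ ∑ i ∈ Finset.range (m+1), (i:ℝ) * ((i:ℝ) - 1) * lam ^ i / i.factorial :=
      Finset.sum_nonneg fun i _ => by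
        have := nn_cast i; positivity
    linarith
  have htail1 : (∑' i : ℕ,
      Real.exp (-lam) * lam ^ (i + (m+1)) / (i + (m+1)).factorial * ((i + (m+1) : ℕ):ℝ))
      ≤ lam / 2 := by
    have step : ∀ i : ℕ,
        Real.exp (-lam) * lam ^ (i + (m+1)) / (i + (m+1)).factorial * ((i + (m+1) : ℕ):ℝ)
        ≤ (Real.exp (-lam) / m) *
          (((i + (m+1) : ℕ):ℝ) * (((i + (m+1) : ℕ):ℝ) - 1) * lam ^ (i + (m+1)) / (i + (m+1)).factorial) := by
      intro i
      set n : ℕ := i + (m+1) with hn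
      have hnm : (m:ℝ) ≤ (n:ℝ) - 1 := by
        have h' : m + 1 ≤ n := by omega
        have h'' : ((m:ℝ) + 1) ≤ (n:ℝ) := by exact_mod_cast h'
        linarith
      have hn0 : (0:ℝ) ≤ (n:ℝ) := Nat.cast_nonneg n
      have hq : (0:ℝ) ≤ Real.exp (-lam) * lam ^ n / n.factorial := by positivity
      have hineq : (n:ℝ) ≤ (n:ℝ) * ((n:ℝ) - 1) / m := by
        rw [le_div_iff₀ hm0]
        nlinarith
      calc Real.exp (-lam) * lam ^ n / n.factorial * (n:ℝ)
          ≤ Real.exp (-lam) * lam ^ n / n.factorial * ((n:ℝ) * ((n:ℝ) - 1) / m) :=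
            mul_le_mul_of_nonneg_left hineq hq
        _ = (Real.exp (-lam) / m) * ((n:ℝ) * ((n:ℝ) - 1) * lam ^ n / n.factorial) := by
            ring
    have h1' := Summable.tsum_le_tsum step hshift1 (hshift2.mul_left _)
    rw [tsum_mul_left] at h1'
    have hee : Real.exp (-lam) * Real.exp lam = 1 := by
      rw [← Real.exp_add]; simp
    have h2' : Real.exp (-lam) / m * (∑' i : ℕ,
        ((i + (m+1) : ℕ):ℝ) * (((i + (m+1) : ℕ):ℝ) - 1) * lam ^ (i + (m+1)) / (i + (m+1)).factorial)
        ≤ Real.exp (-lam) / m * (lam ^ 2 * Real.exp lam) := by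
      apply mul_le_mul_of_nonneg_left htail2 (by positivity)
    have h3' : Real.exp (-lam) / m * (lam ^ 2 * Real.exp lam) = lam ^ 2 / m := by
      field_simp
      nlinarith [hee]
    have h4' : lam ^ 2 / m ≤ lam / 2 := by
      rw [div_le_iff₀ hm0]
      nlinarith
    linarith
  -- partial sum lower bound
  have hpart : lam / 2 ≤ ∑ i ∈ Finset.range (m+1),
      Real.exp (-lam) * lam ^ i / i.factorial * (i:ℝ) := by
    have hsplit := Summable.sum_add_tsum_nat_add
      (f := fun n : ℕ => Real.exp (-lam) * lam ^ n / n.factorial * (n:ℝ)) (m+1) (sum_pn lam)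
    rw [tsum_pn] at hsplit
    linarith
  -- termwise lower bound on [0, m]
  have hterm : ∀ i ∈ Finset.range (m+1),
      Real.exp (-lam) * lam ^ i / i.factorial * (i:ℝ) / (3 * lam) ^ ((1:ℝ)/3)
        ≤ (Real.exp (-lam) * lam ^ i / i.factorial) * (i:ℝ) ^ ((2:ℝ)/3) := by
    intro i hi
    have him : (i:ℝ) ≤ 3 * lam := by
      have : i ≤ m := by
        have := Finset.mem_range.1 hi; omega
      have : (i:ℝ) ≤ (m:ℝ) := by exact_mod_cast this
      linarith
    have hq : (0:ℝ) ≤ Real.exp (-lam) * lam ^ i / i.factorial := by positivity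
    have hkey : (i:ℝ) / (3 * lam) ^ ((1:ℝ)/3) ≤ (i:ℝ) ^ ((2:ℝ)/3) := by
      rw [div_le_iff₀ (Real.rpow_pos_of_pos (by linarith) _)]
      rcases Nat.eq_zero_or_pos i with h|h
      · simp [h]
      · have hi0 : (0:ℝ) < (i:ℝ) := by exact_mod_cast h
        calc (i:ℝ) = (i:ℝ) ^ ((2:ℝ)/3) * (i:ℝ) ^ ((1:ℝ)/3) := by
              rw [← Real.rpow_add hi0]; norm_num
          _ ≤ (i:ℝ) ^ ((2:ℝ)/3) * (3 * lam) ^ ((1:ℝ)/3) :=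
              mul_le_mul_of_nonneg_left
                (Real.rpow_le_rpow hi0.le him (by norm_num)) (by positivity)
    calc Real.exp (-lam) * lam ^ i / i.factorial * (i:ℝ) / (3 * lam) ^ ((1:ℝ)/3)
        = (Real.exp (-lam) * lam ^ i / i.factorial) * ((i:ℝ) / (3 * lam) ^ ((1:ℝ)/3)) := by
          ring
      _ ≤ (Real.exp (-lam) * lam ^ i / i.factorial) * (i:ℝ) ^ ((2:ℝ)/3) :=
          mul_le_mul_of_nonneg_left hkey hq
  have hsum_lb : (lam / 2) / (3 * lam) ^ ((1:ℝ)/3)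
      ≤ (∑' n : ℕ, (Real.exp (-lam) * lam ^ n / n.factorial) * (n:ℝ) ^ ((2:ℝ)/3)) := by
    have h5 : (lam / 2) / (3 * lam) ^ ((1:ℝ)/3)
        ≤ ∑ i ∈ Finset.range (m+1),
          Real.exp (-lam) * lam ^ i / i.factorial * (i:ℝ) / (3 * lam) ^ ((1:ℝ)/3) := by
      rw [← Finset.sum_div]
      gcongr
    have h6 : (∑ i ∈ Finset.range (m+1),
          Real.exp (-lam) * lam ^ i / i.factorial * (i:ℝ) / (3 * lam) ^ ((1:ℝ)/3))
        ≤ ∑ i ∈ Finset.range (m+1),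
          (Real.exp (-lam) * lam ^ i / i.factorial) * (i:ℝ) ^ ((2:ℝ)/3) :=
      Finset.sum_le_sum hterm
    have h7 := Summable.sum_le_tsum (Finset.range (m+1)) (fun i _ => by positivity)
      (sum_f lam hl0.le)
    linarith
  -- final numeric comparison
  have hcube : (3:ℝ) ≤ Real.exp 2 := by
    have := Real.add_one_le_exp 2; linarith
  have h3 : ((3:ℝ)) ^ ((1:ℝ)/3) ≤ Real.exp (2/3) := by
    calc (3:ℝ) ^ ((1:ℝ)/3) ≤ (Real.exp 2) ^ ((1:ℝ)/3) :=
          Real.rpow_le_rpow (by norm_num) hcube (by norm_num)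
      _ = Real.exp (2 * (1/3)) := (Real.exp_mul 2 (1/3)).symm
      _ = Real.exp (2/3) := by norm_num
  have e1 : Real.exp (-(2/3)) * Real.exp (2/3) = 1 := by
    rw [← Real.exp_add]; norm_num
  have e2 : Real.exp (-(2/3)) * (3:ℝ) ^ ((1:ℝ)/3) ≤ 1 := by
    calc Real.exp (-(2/3)) * (3:ℝ) ^ ((1:ℝ)/3)
        ≤ Real.exp (-(2/3)) * Real.exp (2/3) :=
          mul_le_mul_of_nonneg_left h3 (Real.exp_pos _).le
      _ = 1 := e1
  have hsplit3 : (3*lam) ^ ((1:ℝ)/3) = (3:ℝ) ^ ((1:ℝ)/3) * lam ^ ((1:ℝ)/3) :=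
    Real.mul_rpow (by norm_num) hl0.le
  have hlam23 : lam ^ ((2:ℝ)/3) * lam ^ ((1:ℝ)/3) = lam := by
    rw [← Real.rpow_add hl0]; norm_num
  have final : Real.exp (-(2/3)) * lam ^ ((2:ℝ)/3) / 2 ≤ (lam/2)/(3*lam) ^ ((1:ℝ)/3) := by
    rw [le_div_iff₀ (Real.rpow_pos_of_pos (by linarith) _)]
    have expand : Real.exp (-(2/3)) * lam ^ ((2:ℝ)/3) / 2 * (3*lam) ^ ((1:ℝ)/3)
        = (Real.exp (-(2/3)) * (3:ℝ) ^ ((1:ℝ)/3)) * (lam ^ ((2:ℝ)/3) * lam ^ ((1:ℝ)/3)) / 2 := by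
      rw [hsplit3]; ring
    rw [expand, hlam23]
    nlinarith [e2, hl0]
  exact final.trans hsum_lb

/-- Bounds on `E[Z^(2/3)]` for `Z ~ Poisson(λ)`:
if `λ ≥ 1` then `e^(-2/3) λ^(2/3) / 2 ≤ E[Z^(2/3)] ≤ λ^(2/3)`;
if `λ ≤ 1` then `λ e^(-λ) ≤ E[Z^(2/3)] ≤ λ`. -/
theorem poisson_twothirds_moment_bounds (lam : ℝ) (hlam : 0 ≤ lam) :
    (1 ≤ lam →
      Real.exp (-(2 / 3)) * lam ^ ((2 : ℝ) / 3) / 2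
          ≤ (∑' n : ℕ, (Real.exp (-lam) * lam ^ n / n.factorial) * (n : ℝ) ^ ((2 : ℝ) / 3)) ∧
        (∑' n : ℕ, (Real.exp (-lam) * lam ^ n / n.factorial) * (n : ℝ) ^ ((2 : ℝ) / 3))
          ≤ lam ^ ((2 : ℝ) / 3)) ∧
    (lam ≤ 1 →
      lam * Real.exp (-lam)
          ≤ (∑' n : ℕ, (Real.exp (-lam) * lam ^ n / n.factorial) * (n : ℝ) ^ ((2 : ℝ) / 3)) ∧
        (∑' n : ℕ, (Real.exp (-lam) * lam ^ n / n.factorial) * (n : ℝ) ^ ((2 : ℝ) / 3))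
          ≤ lam) := by
  constructor
  · intro h1
    exact ⟨lower_big lam h1, upper_jensen lam (lt_of_lt_of_le zero_lt_one h1)⟩
  · intro _
    exact ⟨lower_small lam hlam, upper_lam lam hlam⟩
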